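/- arXiv:1309.3648 — 2 statements merged into one kernel-verified Lean document; each statement's English description precedes it below -/
import Mathlib

section
/- For every real numbers a, b ≥ 0 and integer n ≥ 2, one has |a^n - b^n| ≤ (n/(n-1)) · (a + b) · |a^{n-1} - b^{n-1}|. -/
namespace PortedStatement

lemma abs_pow_sub_pow_le_aux (a b : ℝ) (ha : 0 ≤ a) (hb : 0 ≤ b) (hab : b ≤ a) (k : ℕ) :
    |a ^ (k + 2) - b ^ (k + 2)| ≤
      (((k:ℝ) + 2) / ((k:ℝ) + 1)) * (a + b) * |a ^ (k + 1) - b ^ (k + 1)| := by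
  have hk : b ^ k ≤ a ^ k := pow_le_pow_left₀ hb hab _
  have h1 : b ^ (k + 1) ≤ a ^ (k + 1) := pow_le_pow_left₀ hb hab _
  have h2 : b ^ (k + 2) ≤ a ^ (k + 2) := pow_le_pow_left₀ hb hab _
  rw [abs_of_nonneg (sub_nonneg.2 h1), abs_of_nonneg (sub_nonneg.2 h2)]
  have key : a ^ (k + 2) - b ^ (k + 2) ≤ (a + b) * (a ^ (k + 1) - b ^ (k + 1)) := by
    have hid : (a + b) * (a ^ (k + 1) - b ^ (k + 1)) - (a ^ (k + 2) - b ^ (k + 2))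
        = a * b * (a ^ k - b ^ k) := by ring
    have := mul_nonneg (mul_nonneg ha hb) (sub_nonneg.2 hk)
    linarith
  have hc : (1:ℝ) ≤ ((k:ℝ) + 2) / ((k:ℝ) + 1) := by
    rw [le_div_iff₀ (by positivity)]; linarith
  calc a ^ (k + 2) - b ^ (k + 2) ≤ (a + b) * (a ^ (k + 1) - b ^ (k + 1)) := key
    _ ≤ (((k:ℝ) + 2) / ((k:ℝ) + 1)) * ((a + b) * (a ^ (k + 1) - b ^ (k + 1))) :=
        le_mul_of_one_le_left (mul_nonneg (by linarith) (sub_nonneg.2 h1)) hc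
    _ = (((k:ℝ) + 2) / ((k:ℝ) + 1)) * (a + b) * (a ^ (k + 1) - b ^ (k + 1)) := by ring

theorem abs_pow_sub_pow_le (a b : ℝ) (ha : 0 ≤ a) (hb : 0 ≤ b) (n : ℕ) (hn : 2 ≤ n) :
    |a ^ n - b ^ n| ≤ ((n : ℝ) / ((n : ℝ) - 1)) * (a + b) * |a ^ (n - 1) - b ^ (n - 1)| := by
  obtain ⟨k, rfl⟩ : ∃ k, n = k + 2 := ⟨n - 2, by omega⟩
  have hsub : k + 2 - 1 = k + 1 := rfl
  rw [hsub]
  have hcast : ((k + 2 : ℕ) : ℝ) / (((k + 2 : ℕ) : ℝ) - 1) = ((k:ℝ) + 2) / ((k:ℝ) + 1) := by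
    push_cast; ring_nf
  rw [hcast]
  rcases le_total b a with hab | hab
  · exact abs_pow_sub_pow_le_aux a b ha hb hab k
  · have := abs_pow_sub_pow_le_aux b a hb ha hab k
    rwa [abs_sub_comm, add_comm b a, abs_sub_comm (b ^ (k+1))] at this
end PortedStatement
end

section
/- Let c : 𝒞 → ℝ be a continuous, translation-invariant, monotone set function on the class 𝒞 of nonempty compact convex subsets of ℝ^n satisfying c(K) ≤ diam(K)/2 for all K and c(B) = r for every closed ball B of radius r. Suppose μ is a finite Borel measure on S^{n−1} with P_μ(ξ) := ∫ max{0, ξ·η} dμ(η) bounded below by a positive constant and satisfying P_μ(ξ) = P_μ(−ξ) for all ξ. Then the infimum M = inf{∫ h_K dμ : K ∈ 𝒞, c(K) ≥ 1} is strictly positive. -/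
open MeasureTheory

/-- Nonempty compact convex subsets of `ℝⁿ`. -/
def IsCC {n : ℕ} (K : Set (EuclideanSpace ℝ (Fin n))) : Prop :=
  K.Nonempty ∧ IsCompact K ∧ Convex ℝ K

/-- `P_μ(ξ) = ∫ max{0, ξ·η} dμ(η)` for a measure `μ` on the unit sphere. -/
noncomputable def Pmu {n : ℕ}
    (μ : Measure (Metric.sphere (0 : EuclideanSpace ℝ (Fin n)) 1))
    (ξ : EuclideanSpace ℝ (Fin n)) : ℝ :=
  ∫ η, max 0 (inner ℝ ξ (η : EuclideanSpace ℝ (Fin n)) : ℝ) ∂μ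

section Helpers

variable {n : ℕ} (μ : Measure (Metric.sphere (0 : EuclideanSpace ℝ (Fin n)) 1))

lemma norm_coe_sphere' (ξ : Metric.sphere (0 : EuclideanSpace ℝ (Fin n)) 1) :
    ‖(ξ : EuclideanSpace ℝ (Fin n))‖ = 1 := by
  have := ξ.2
  simp [mem_sphere_iff_norm] at this
  simpa using this

lemma integrable_maxinner [IsFiniteMeasure μ] (w : EuclideanSpace ℝ (Fin n)) :
    Integrable (fun ξ : Metric.sphere (0 : EuclideanSpace ℝ (Fin n)) 1 =>
      max 0 (inner ℝ w (ξ : EuclideanSpace ℝ (Fin n)) : ℝ)) μ := by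
  have hcont : Continuous (fun ξ : Metric.sphere (0 : EuclideanSpace ℝ (Fin n)) 1 =>
      max 0 (inner ℝ w (ξ : EuclideanSpace ℝ (Fin n)) : ℝ)) :=
    continuous_const.max (Continuous.inner continuous_const continuous_subtype_val)
  refine Integrable.mono' (integrable_const ‖w‖) hcont.aestronglyMeasurable ?_
  filter_upwards with ξ
  have h1 : |(inner ℝ w (ξ : EuclideanSpace ℝ (Fin n)) : ℝ)| ≤ ‖w‖ := by
    calc |(inner ℝ w (ξ : EuclideanSpace ℝ (Fin n)) : ℝ)| ≤ ‖w‖ * ‖(ξ : EuclideanSpace ℝ (Fin n))‖ :=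
      abs_real_inner_le_norm _ _
    _ = ‖w‖ := by rw [norm_coe_sphere', mul_one]
  rw [Real.norm_eq_abs, abs_of_nonneg (le_max_left _ _)]
  exact le_trans (max_le (abs_nonneg _) (le_abs_self _)) h1

lemma integrable_inner' [IsFiniteMeasure μ] (w : EuclideanSpace ℝ (Fin n)) :
    Integrable (fun ξ : Metric.sphere (0 : EuclideanSpace ℝ (Fin n)) 1 =>
      (inner ℝ w (ξ : EuclideanSpace ℝ (Fin n)) : ℝ)) μ := by
  have hcont : Continuous (fun ξ : Metric.sphere (0 : EuclideanSpace ℝ (Fin n)) 1 =>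
      (inner ℝ w (ξ : EuclideanSpace ℝ (Fin n)) : ℝ)) :=
    Continuous.inner continuous_const continuous_subtype_val
  refine Integrable.mono' (integrable_const ‖w‖) hcont.aestronglyMeasurable ?_
  filter_upwards with ξ
  rw [Real.norm_eq_abs]
  calc |(inner ℝ w (ξ : EuclideanSpace ℝ (Fin n)) : ℝ)| ≤ ‖w‖ * ‖(ξ : EuclideanSpace ℝ (Fin n))‖ :=
    abs_real_inner_le_norm _ _
  _ = ‖w‖ := by rw [norm_coe_sphere', mul_one]

lemma Pmu_smul (a : ℝ) (ha : 0 ≤ a) (v : EuclideanSpace ℝ (Fin n)) :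
    Pmu μ (a • v) = a * Pmu μ v := by
  unfold Pmu
  rw [← integral_const_mul]
  congr 1; funext η
  rw [real_inner_smul_left, mul_max_of_nonneg _ _ ha, mul_zero]

lemma Pmu_even (heven : ∀ ξ : EuclideanSpace ℝ (Fin n), ‖ξ‖ = 1 → Pmu μ ξ = Pmu μ (-ξ))
    (v : EuclideanSpace ℝ (Fin n)) : Pmu μ v = Pmu μ (-v) := by
  rcases eq_or_ne v 0 with rfl | hv
  · simp
  · have hnv : (0:ℝ) < ‖v‖ := norm_pos_iff.mpr hv
    set u := ‖v‖⁻¹ • v with hu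
    have hun : ‖u‖ = 1 := by
      rw [hu, norm_smul, norm_inv, norm_norm, inv_mul_cancel₀ hnv.ne']
    have h1 : v = ‖v‖ • u := by
      rw [hu, smul_smul, mul_inv_cancel₀ hnv.ne', one_smul]
    have h2 : Pmu μ v = ‖v‖ * Pmu μ u := by
      conv_lhs => rw [h1]
      exact Pmu_smul μ _ (norm_nonneg v) u
    have h3 : Pmu μ (-v) = ‖v‖ * Pmu μ (-u) := by
      conv_lhs => rw [h1, ← smul_neg]
      exact Pmu_smul μ _ (norm_nonneg v) _
    rw [h2, h3, heven u hun]

lemma Pmu_lower {m : ℝ}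
    (hlow : ∀ ξ : EuclideanSpace ℝ (Fin n), ‖ξ‖ = 1 → m ≤ Pmu μ ξ)
    (v : EuclideanSpace ℝ (Fin n)) (hv : v ≠ 0) : ‖v‖ * m ≤ Pmu μ v := by
  have hnv : (0:ℝ) < ‖v‖ := norm_pos_iff.mpr hv
  set u := ‖v‖⁻¹ • v with hu
  have hun : ‖u‖ = 1 := by
    rw [hu, norm_smul, norm_inv, norm_norm, inv_mul_cancel₀ hnv.ne']
  have h1 : v = ‖v‖ • u := by
    rw [hu, smul_smul, mul_inv_cancel₀ hnv.ne', one_smul]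
  have h2 : Pmu μ v = ‖v‖ * Pmu μ u := by
    conv_lhs => rw [h1]
    exact Pmu_smul μ _ (norm_nonneg v) u
  rw [h2]
  exact mul_le_mul_of_nonneg_left (hlow u hun) (norm_nonneg v)

lemma integral_inner_eq [IsFiniteMeasure μ] (w : EuclideanSpace ℝ (Fin n)) :
    ∫ ξ, (inner ℝ w (ξ : EuclideanSpace ℝ (Fin n)) : ℝ) ∂μ = Pmu μ w - Pmu μ (-w) := by
  unfold Pmu
  rw [← integral_sub (integrable_maxinner μ w) (integrable_maxinner μ (-w))]
  congr 1; funext η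
  rw [inner_neg_left]
  have : ∀ t : ℝ, t = max 0 t - max 0 (-t) := by
    intro t; rcases le_total 0 t with h | h
    · rw [max_eq_right h, max_eq_left (by linarith), sub_zero]
    · rw [max_eq_left h, max_eq_right (by linarith)]; ring
  exact this _

lemma bddAbove_inner_image {K : Set (EuclideanSpace ℝ (Fin n))} (hKc : IsCompact K)
    (ξ : EuclideanSpace ℝ (Fin n)) :
    BddAbove ((fun y => (inner ℝ ξ y : ℝ)) '' K) :=
  (hKc.image (Continuous.inner continuous_const continuous_id)).bddAbove

lemma supp_integrable [IsFiniteMeasure μ] {K : Set (EuclideanSpace ℝ (Fin n))}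
    (hne : K.Nonempty) (hKc : IsCompact K) :
    Integrable (fun ξ : Metric.sphere (0 : EuclideanSpace ℝ (Fin n)) 1 =>
      sSup ((fun y => (inner ℝ (ξ : EuclideanSpace ℝ (Fin n)) y : ℝ)) '' K)) μ := by
  obtain ⟨R0, hR0⟩ := hKc.isBounded.exists_norm_le
  set R := max R0 0 with hRdef
  have hR : ∀ y ∈ K, ‖y‖ ≤ R := fun y hy => le_trans (hR0 y hy) (le_max_left _ _)
  have hRnn : 0 ≤ R := le_max_right _ _
  set f : EuclideanSpace ℝ (Fin n) → ℝ :=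
    fun ξ => sSup ((fun y => (inner ℝ ξ y : ℝ)) '' K) with hf
  have key : ∀ ξ ξ' : EuclideanSpace ℝ (Fin n), f ξ ≤ f ξ' + R * ‖ξ - ξ'‖ := by
    intro ξ ξ'
    refine csSup_le (hne.image _) ?_
    rintro _ ⟨y, hy, rfl⟩
    have e1 : (inner ℝ ξ y : ℝ) = inner ℝ ξ' y + (inner ℝ (ξ - ξ') y : ℝ) := by
      rw [← inner_add_left, add_sub_cancel]
    have e2 : (inner ℝ ξ' y : ℝ) ≤ f ξ' := le_csSup (bddAbove_inner_image hKc ξ') ⟨y, hy, rfl⟩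
    have e3 : (inner ℝ (ξ - ξ') y : ℝ) ≤ ‖ξ - ξ'‖ * ‖y‖ := real_inner_le_norm _ _
    have e4 : ‖ξ - ξ'‖ * ‖y‖ ≤ R * ‖ξ - ξ'‖ := by
      rw [mul_comm]
      exact mul_le_mul_of_nonneg_right (hR y hy) (norm_nonneg _)
    linarith
  have hlip : LipschitzWith (Real.toNNReal R) f := by
    refine LipschitzWith.of_dist_le_mul fun ξ ξ' => ?_
    rw [Real.dist_eq, dist_eq_norm, Real.coe_toNNReal R hRnn]
    refine abs_sub_le_iff.mpr ⟨by linarith [key ξ ξ'], ?_⟩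
    have := key ξ' ξ
    rw [norm_sub_rev] at this
    linarith
  have hcont : Continuous (fun ξ : Metric.sphere (0 : EuclideanSpace ℝ (Fin n)) 1 =>
      f (ξ : EuclideanSpace ℝ (Fin n))) := hlip.continuous.comp continuous_subtype_val
  refine Integrable.mono' (integrable_const R) hcont.aestronglyMeasurable ?_
  filter_upwards with ξ
  rw [Real.norm_eq_abs, abs_le]
  constructor
  · obtain ⟨z, hz⟩ := hne
    have h1 : -R ≤ (inner ℝ (ξ : EuclideanSpace ℝ (Fin n)) z : ℝ) := by
      have h2 := abs_real_inner_le_norm (ξ : EuclideanSpace ℝ (Fin n)) z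
      rw [norm_coe_sphere', one_mul] at h2
      have h3 := neg_abs_le (inner ℝ (ξ : EuclideanSpace ℝ (Fin n)) z : ℝ)
      have h4 := hR z hz
      linarith
    exact le_trans h1 (le_csSup (bddAbove_inner_image hKc _) ⟨z, hz, rfl⟩)
  · refine csSup_le (hne.image _) ?_
    rintro _ ⟨y, hy, rfl⟩
    have h2 := abs_real_inner_le_norm (ξ : EuclideanSpace ℝ (Fin n)) y
    rw [norm_coe_sphere', one_mul] at h2
    have h3 := le_abs_self (inner ℝ (ξ : EuclideanSpace ℝ (Fin n)) y : ℝ)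
    linarith [hR y hy]

end Helpers

theorem minkowski_infimum_positive {n : ℕ}
    (c : Set (EuclideanSpace ℝ (Fin n)) → ℝ)
    (hcont : ∀ K, IsCC K → ∀ ε > (0 : ℝ), ∃ δ > (0 : ℝ), ∀ L, IsCC L →
      Metric.hausdorffDist K L < δ → |c L - c K| < ε)
    (htrans : ∀ (K : Set (EuclideanSpace ℝ (Fin n))) (x : EuclideanSpace ℝ (Fin n)),
      c ((fun y => y + x) '' K) = c K)
    (hmono : ∀ K L, IsCC K → IsCC L → K ⊆ L → c K ≤ c L)
    (hdiam : ∀ K, IsCC K → c K ≤ Metric.diam K / 2)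
    (hball : ∀ (x : EuclideanSpace ℝ (Fin n)) (r : ℝ), 0 ≤ r →
      c (Metric.closedBall x r) = r)
    (μ : Measure (Metric.sphere (0 : EuclideanSpace ℝ (Fin n)) 1)) [IsFiniteMeasure μ]
    (m : ℝ) (hm : 0 < m)
    (hlow : ∀ ξ : EuclideanSpace ℝ (Fin n), ‖ξ‖ = 1 → m ≤ Pmu μ ξ)
    (heven : ∀ ξ : EuclideanSpace ℝ (Fin n), ‖ξ‖ = 1 → Pmu μ ξ = Pmu μ (-ξ)) :
    0 < sInf { r : ℝ | ∃ K, IsCC K ∧ 1 ≤ c K ∧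
      r = ∫ ξ, sSup ((fun y => (inner ℝ (ξ : EuclideanSpace ℝ (Fin n)) y : ℝ)) '' K) ∂μ } := by
  have hSne : { r : ℝ | ∃ K, IsCC K ∧ 1 ≤ c K ∧
      r = ∫ ξ, sSup ((fun y => (inner ℝ (ξ : EuclideanSpace ℝ (Fin n)) y : ℝ)) '' K) ∂μ }.Nonempty := by
    refine ⟨_, Metric.closedBall (0 : EuclideanSpace ℝ (Fin n)) 1,
      ⟨⟨0, Metric.mem_closedBall_self zero_le_one⟩, isCompact_closedBall _ _,
        convex_closedBall _ _⟩, (hball 0 1 zero_le_one).ge, rfl⟩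
  refine lt_of_lt_of_le hm (le_csInf hSne ?_)
  rintro r ⟨K, ⟨hKne, hKc, hKconv⟩, hc1, rfl⟩
  have hd : (2:ℝ) ≤ Metric.diam K := by
    have := hdiam K ⟨hKne, hKc, hKconv⟩; linarith
  obtain ⟨x, hx, y, hy, hxy⟩ : ∃ x ∈ K, ∃ y ∈ K, 1 < dist x y := by
    by_contra h
    push_neg at h
    have : Metric.diam K ≤ 1 :=
      Metric.diam_le_of_forall_dist_le zero_le_one fun a ha b hb => h a ha b hb
    linarith
  set p : EuclideanSpace ℝ (Fin n) := (2:ℝ)⁻¹ • (x + y) with hp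
  set v : EuclideanSpace ℝ (Fin n) := (2:ℝ)⁻¹ • (y - x) with hv
  have hvnorm : (2:ℝ)⁻¹ < ‖v‖ := by
    rw [hv, norm_smul, norm_inv, Real.norm_ofNat]
    have : ‖y - x‖ = dist y x := (dist_eq_norm y x).symm
    rw [this, dist_comm]
    nlinarith
  have hvne : v ≠ 0 := by
    intro h
    rw [h, norm_zero] at hvnorm
    norm_num at hvnorm
  -- pointwise bound
  set g : Metric.sphere (0 : EuclideanSpace ℝ (Fin n)) 1 → ℝ :=
    fun ξ => (inner ℝ p (ξ : EuclideanSpace ℝ (Fin n)) : ℝ) +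
      (max 0 (inner ℝ v (ξ : EuclideanSpace ℝ (Fin n)) : ℝ) +
        max 0 (inner ℝ (-v) (ξ : EuclideanSpace ℝ (Fin n)) : ℝ)) with hg
  have hgint : Integrable g μ :=
    (integrable_inner' μ p).add ((integrable_maxinner μ v).add (integrable_maxinner μ (-v)))
  have hfint := supp_integrable μ hKne hKc
  have hpoint : ∀ ξ : Metric.sphere (0 : EuclideanSpace ℝ (Fin n)) 1,
      g ξ ≤ sSup ((fun z => (inner ℝ (ξ : EuclideanSpace ℝ (Fin n)) z : ℝ)) '' K) := by
    intro ξ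
    set A : ℝ := (inner ℝ (ξ : EuclideanSpace ℝ (Fin n)) x : ℝ) with hA
    set B : ℝ := (inner ℝ (ξ : EuclideanSpace ℝ (Fin n)) y : ℝ) with hB
    have hAle : A ≤ sSup ((fun z => (inner ℝ (ξ : EuclideanSpace ℝ (Fin n)) z : ℝ)) '' K) :=
      le_csSup (bddAbove_inner_image hKc _) ⟨x, hx, rfl⟩
    have hBle : B ≤ sSup ((fun z => (inner ℝ (ξ : EuclideanSpace ℝ (Fin n)) z : ℝ)) '' K) :=
      le_csSup (bddAbove_inner_image hKc _) ⟨y, hy, rfl⟩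
    have eP : (inner ℝ p (ξ : EuclideanSpace ℝ (Fin n)) : ℝ) = 2⁻¹ * (A + B) := by
      rw [hp, real_inner_smul_left, inner_add_left, hA, hB,
        real_inner_comm x, real_inner_comm y]
    have eV : (inner ℝ v (ξ : EuclideanSpace ℝ (Fin n)) : ℝ) = 2⁻¹ * (B - A) := by
      rw [hv, real_inner_smul_left, inner_sub_left, hA, hB,
        real_inner_comm x, real_inner_comm y]
    have eVn : (inner ℝ (-v) (ξ : EuclideanSpace ℝ (Fin n)) : ℝ) = -(2⁻¹ * (B - A)) := by
      rw [inner_neg_left, eV]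
    rw [hg]
    simp only [eP, eV, eVn]
    rcases le_total A B with h | h
    · rw [max_eq_right (by linarith), max_eq_left (by linarith)]
      linarith
    · rw [max_eq_left (by linarith), max_eq_right (by linarith)]
      linarith
  have hmono' : (∫ ξ, g ξ ∂μ) ≤
      ∫ ξ, sSup ((fun z => (inner ℝ (ξ : EuclideanSpace ℝ (Fin n)) z : ℝ)) '' K) ∂μ :=
    integral_mono hgint hfint hpoint
  have hgval : (∫ ξ, g ξ ∂μ) = (Pmu μ p - Pmu μ (-p)) + (Pmu μ v + Pmu μ (-v)) := by
    have e1 : (∫ ξ, g ξ ∂μ) =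
        (∫ ξ : Metric.sphere (0 : EuclideanSpace ℝ (Fin n)) 1,
          (inner ℝ p (ξ : EuclideanSpace ℝ (Fin n)) : ℝ) ∂μ) +
        ∫ ξ : Metric.sphere (0 : EuclideanSpace ℝ (Fin n)) 1,
          (max 0 (inner ℝ v (ξ : EuclideanSpace ℝ (Fin n)) : ℝ) +
            max 0 (inner ℝ (-v) (ξ : EuclideanSpace ℝ (Fin n)) : ℝ)) ∂μ :=
      integral_add (integrable_inner' μ p)
        ((integrable_maxinner μ v).add (integrable_maxinner μ (-v)))
    have e2 : (∫ ξ : Metric.sphere (0 : EuclideanSpace ℝ (Fin n)) 1,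
          (max 0 (inner ℝ v (ξ : EuclideanSpace ℝ (Fin n)) : ℝ) +
            max 0 (inner ℝ (-v) (ξ : EuclideanSpace ℝ (Fin n)) : ℝ)) ∂μ) =
        (∫ ξ : Metric.sphere (0 : EuclideanSpace ℝ (Fin n)) 1,
          max 0 (inner ℝ v (ξ : EuclideanSpace ℝ (Fin n)) : ℝ) ∂μ) +
        ∫ ξ : Metric.sphere (0 : EuclideanSpace ℝ (Fin n)) 1,
          max 0 (inner ℝ (-v) (ξ : EuclideanSpace ℝ (Fin n)) : ℝ) ∂μ :=
      integral_add (integrable_maxinner μ v) (integrable_maxinner μ (-v))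
    rw [e1, e2, integral_inner_eq μ p]
    rfl
  have hpzero : Pmu μ p - Pmu μ (-p) = 0 := by
    rw [Pmu_even μ heven p, sub_self]
  have hvlow : m ≤ Pmu μ v + Pmu μ (-v) := by
    rw [← Pmu_even μ heven v]
    have h1 : ‖v‖ * m ≤ Pmu μ v := Pmu_lower μ hlow v hvne
    nlinarith
  calc m ≤ (∫ ξ, g ξ ∂μ) := by rw [hgval, hpzero]; linarith
  _ ≤ _ := hmono'
end
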